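/- L1 is stable: let (Ω, μ) be a measure space, let (f_n) and (g_m) be bounded sequences in L1(μ), and let 𝒰 and 𝒱 be free ultrafilters on ℕ. Suppose S_m, L_n, S, L are real numbers such that: for every m, ‖f_n − g_m‖₁ converges to S_m along 𝒰; S_m converges to S along 𝒱; for every n, ‖f_n − g_m‖₁ converges to L_n along 𝒱; and L_n converges to L along 𝒰. Then S = L; that is, lim_{n,𝒰} lim_{m,𝒱} ‖f_n − g_m‖₁ = lim_{m,𝒱} lim_{n,𝒰} ‖f_n − g_m‖₁. -/

import Mathlib

open MeasureTheory Filter Set RealInnerProductSpace ENNReal NNReal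

noncomputable section L1StableAux

namespace L1StableAux

lemma ofReal_norm_eq_coe_nnnorm {E : Type*} [NormedAddCommGroup E] (x : E) :
    ENNReal.ofReal ‖x‖ = (‖x‖₊ : ℝ≥0∞) := ofReal_norm x

lemma eLpNorm_one_eq_lintegral_nnnorm {α : Type*} [MeasurableSpace α] {μ : Measure α}
    {f : α → ℝ} : eLpNorm f 1 μ = ∫⁻ x, (‖f x‖₊ : ℝ≥0∞) ∂μ :=
  eLpNorm_one_eq_lintegral_enorm

lemma eLpNorm_eq_lintegral_rpow_nnnorm {α : Type*} [MeasurableSpace α] {μ : Measure α}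
    {p : ℝ≥0∞} (hp0 : p ≠ 0) (hp : p ≠ ∞) {f : α → ℝ} :
    eLpNorm f p μ = (∫⁻ x, (‖f x‖₊ : ℝ≥0∞) ^ p.toReal ∂μ) ^ (1 / p.toReal) :=
  eLpNorm_eq_lintegral_rpow_enorm_toReal hp0 hp

/-- `phi x = 1_{(0,x]} - 1_{(x,0]}` as a function of `u`. -/
def phi (x u : ℝ) : ℝ :=
  (if 0 < u ∧ u ≤ x then (1 : ℝ) else 0) - (if x < u ∧ u ≤ 0 then (1 : ℝ) else 0)

lemma phi_eq_pos (x u : ℝ) (hu : 0 < u) : phi x u = if u ≤ x then 1 else 0 := by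
  unfold phi
  rw [if_neg (show ¬(x < u ∧ u ≤ 0) from fun h => by linarith [h.2])]
  by_cases h : u ≤ x
  · rw [if_pos ⟨hu, h⟩, if_pos h]; ring
  · rw [if_neg (fun c => h c.2), if_neg h]; ring

lemma phi_eq_nonpos (x u : ℝ) (hu : u ≤ 0) : phi x u = if x < u then -1 else 0 := by
  unfold phi
  rw [if_neg (show ¬(0 < u ∧ u ≤ x) from fun h => by linarith [h.1])]
  by_cases h : x < u
  · rw [if_pos ⟨h, hu⟩, if_pos h]; ring
  · rw [if_neg (fun c => h c.1), if_neg h]; ring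

lemma phi_zero (u : ℝ) : phi 0 u = 0 := by
  rcases le_or_gt u 0 with hu | hu
  · rw [phi_eq_nonpos 0 u hu]
    rw [if_neg (by intro h; linarith)]
  · rw [phi_eq_pos 0 u hu]
    rw [if_neg (by intro h; linarith)]

lemma phi_sub_sq (x y u : ℝ) :
    (phi x u - phi y u) ^ 2 = Set.indicator (Set.Ioc (min x y) (max x y)) 1 u := by
  rw [Set.indicator_apply]
  simp only [Set.mem_Ioc, Pi.one_apply]
  rcases le_or_gt u 0 with hu | hu
  · rw [phi_eq_nonpos x u hu, phi_eq_nonpos y u hu]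
    by_cases h1 : x < u <;> by_cases h2 : y < u
    · rw [if_pos h1, if_pos h2,
        if_neg (by rintro ⟨-, c⟩; rcases max_cases x y with ⟨he, -⟩ | ⟨he, -⟩ <;> linarith)]
      ring
    · rw [if_pos h1, if_neg h2,
        if_pos ⟨lt_of_le_of_lt (min_le_left x y) h1,
          le_trans (not_lt.mp h2) (le_max_right x y)⟩]
      ring
    · rw [if_neg h1, if_pos h2,
        if_pos ⟨lt_of_le_of_lt (min_le_right x y) h2,
          le_trans (not_lt.mp h1) (le_max_left x y)⟩]
      ring
    · rw [if_neg h1, if_neg h2,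
        if_neg (by
          rintro ⟨c, -⟩
          rcases min_cases x y with ⟨he, -⟩ | ⟨he, -⟩ <;>
            linarith [not_lt.mp h1, not_lt.mp h2])]
      ring
  · rw [phi_eq_pos x u hu, phi_eq_pos y u hu]
    by_cases h1 : u ≤ x <;> by_cases h2 : u ≤ y
    · rw [if_pos h1, if_pos h2,
        if_neg (by rintro ⟨c, -⟩; rcases min_cases x y with ⟨he, -⟩ | ⟨he, -⟩ <;> linarith)]
      ring
    · rw [if_pos h1, if_neg h2,
        if_pos ⟨lt_of_le_of_lt (min_le_right x y) (not_le.mp h2),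
          le_trans h1 (le_max_left x y)⟩]
      ring
    · rw [if_neg h1, if_pos h2,
        if_pos ⟨lt_of_le_of_lt (min_le_left x y) (not_le.mp h1),
          le_trans h2 (le_max_right x y)⟩]
      ring
    · rw [if_neg h1, if_neg h2,
        if_neg (by
          rintro ⟨-, c⟩
          rcases max_cases x y with ⟨he, -⟩ | ⟨he, -⟩ <;>
            linarith [not_le.mp h1, not_le.mp h2])]
      ring

lemma lintegral_phi_sub_sq (x y : ℝ) :
    ∫⁻ u, (‖phi x u - phi y u‖₊ : ℝ≥0∞) ^ 2 ∂(volume : Measure ℝ)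
      = ENNReal.ofReal |x - y| := by
  have hpt : ∀ u, (‖phi x u - phi y u‖₊ : ℝ≥0∞) ^ 2
      = Set.indicator (Set.Ioc (min x y) (max x y)) (fun _ => (1 : ℝ≥0∞)) u := by
    intro u
    have h1 : (‖phi x u - phi y u‖₊ : ℝ≥0∞) ^ 2
        = ENNReal.ofReal ((phi x u - phi y u) ^ 2) := by
      rw [← ofReal_norm_eq_coe_nnnorm, ← ENNReal.ofReal_pow (norm_nonneg _)]
      rw [Real.norm_eq_abs, sq_abs]
    rw [h1, phi_sub_sq]
    rw [Set.indicator_apply, Set.indicator_apply]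
    split_ifs <;> simp
  simp_rw [hpt]
  rw [lintegral_indicator measurableSet_Ioc]
  simp [Real.volume_Ioc, max_sub_min_eq_abs, abs_sub_comm]

variable {Ω : Type*} [MeasurableSpace Ω] {μ : Measure Ω}

/-- The negative-type embedding of functions into functions on `Ω × ℝ`. -/
def Phi (v : Ω → ℝ) : Ω × ℝ → ℝ := fun p => phi (v p.1) p.2

lemma measurable_Phi {v : Ω → ℝ} (hv : Measurable v) : Measurable (Phi v) := by
  unfold Phi phi
  apply Measurable.sub
  · have hs : MeasurableSet {p : Ω × ℝ | 0 < p.2 ∧ p.2 ≤ v p.1} :=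
      (measurableSet_lt measurable_const measurable_snd).inter
        (measurableSet_le measurable_snd (hv.comp measurable_fst))
    exact Measurable.ite hs measurable_const measurable_const
  · have hs : MeasurableSet {p : Ω × ℝ | v p.1 < p.2 ∧ p.2 ≤ 0} :=
      (measurableSet_lt (hv.comp measurable_fst) measurable_snd).inter
        (measurableSet_le measurable_snd measurable_const)
    exact Measurable.ite hs measurable_const measurable_const

lemma Phi_zero : Phi (fun _ : Ω => (0 : ℝ)) = 0 := by
  funext p; exact phi_zero p.2

lemma lintegral_Phi_sub {v w : Ω → ℝ} (hv : Measurable v) (hw : Measurable w) :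
    ∫⁻ p, (‖Phi v p - Phi w p‖₊ : ℝ≥0∞) ^ 2 ∂(μ.prod (volume : Measure ℝ))
      = ∫⁻ ω, (‖v ω - w ω‖₊ : ℝ≥0∞) ∂μ := by
  rw [lintegral_prod (fun p => (‖Phi v p - Phi w p‖₊ : ℝ≥0∞) ^ 2)
    ((((measurable_Phi hv).sub (measurable_Phi hw)).nnnorm.coe_nnreal_ennreal.pow_const 2).aemeasurable)]
  refine lintegral_congr fun ω => ?_
  have h : ∫⁻ u, (‖Phi v (ω, u) - Phi w (ω, u)‖₊ : ℝ≥0∞) ^ 2 ∂(volume : Measure ℝ)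
      = ENNReal.ofReal |v ω - w ω| := lintegral_phi_sub_sq (v ω) (w ω)
  rw [h, ← Real.norm_eq_abs, ofReal_norm_eq_coe_nnnorm]

lemma eLpNorm_two_sq {δ : Type*} [MeasurableSpace δ] (ν : Measure δ) (F : δ → ℝ) :
    eLpNorm F 2 ν = (∫⁻ p, (‖F p‖₊ : ℝ≥0∞) ^ 2 ∂ν) ^ (1 / 2 : ℝ) := by
  rw [eLpNorm_eq_lintegral_rpow_nnnorm (by norm_num) (by norm_num)]
  rw [show ((2 : ℝ≥0∞).toReal) = ((2 : ℕ) : ℝ) by norm_num]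
  simp_rw [ENNReal.rpow_natCast]
  norm_num

lemma memℒp_Phi {v : Ω → ℝ} (hv : Measurable v) (hv1 : eLpNorm v 1 μ < ⊤) :
    MemLp (Phi v) 2 (μ.prod (volume : Measure ℝ)) := by
  refine ⟨(measurable_Phi hv).aestronglyMeasurable, ?_⟩
  rw [eLpNorm_two_sq]
  have h0 : Measurable (fun _ : Ω => (0 : ℝ)) := measurable_const
  have h := lintegral_Phi_sub (μ := μ) hv h0
  rw [Phi_zero] at h
  simp only [Pi.zero_apply, sub_zero] at h
  rw [h, ← eLpNorm_one_eq_lintegral_nnnorm]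
  exact ENNReal.rpow_lt_top_of_nonneg (by norm_num) hv1.ne

lemma norm_toLp_Phi_sub {v w : Ω → ℝ} (hv : Measurable v) (hw : Measurable w)
    (h2v : MemLp (Phi v) 2 (μ.prod (volume : Measure ℝ)))
    (h2w : MemLp (Phi w) 2 (μ.prod (volume : Measure ℝ))) :
    ‖h2v.toLp (Phi v) - h2w.toLp (Phi w)‖ ^ 2
      = (∫⁻ ω, (‖v ω - w ω‖₊ : ℝ≥0∞) ∂μ).toReal := by
  rw [← MemLp.toLp_sub, Lp.norm_toLp, eLpNorm_two_sq]
  have h : ∫⁻ p, (‖(Phi v - Phi w) p‖₊ : ℝ≥0∞) ^ 2 ∂(μ.prod (volume : Measure ℝ))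
      = ∫⁻ ω, (‖v ω - w ω‖₊ : ℝ≥0∞) ∂μ := by
    simp_rw [Pi.sub_apply]
    exact lintegral_Phi_sub hv hw
  rw [h]
  set x := ∫⁻ ω, (‖v ω - w ω‖₊ : ℝ≥0∞) ∂μ with hx
  rw [← Real.rpow_natCast ((x ^ (1 / 2 : ℝ)).toReal) 2, ENNReal.toReal_rpow,
    ← ENNReal.rpow_mul]
  norm_num

/-- Ultrafilter limit of a bounded real sequence exists. -/
lemma ultrafilter_real_limit (U : Ultrafilter ℕ) (x : ℕ → ℝ) (a b : ℝ)
    (h : ∀ n, x n ∈ Set.Icc a b) :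
    ∃ r, Tendsto x (U : Filter ℕ) (nhds r) := by
  obtain ⟨r, -, hr⟩ := (isCompact_Icc (a := a) (b := b)).ultrafilter_le_nhds (U.map x)
    (by
      rw [le_principal_iff, Ultrafilter.mem_coe, Ultrafilter.mem_map]
      exact Filter.mem_of_superset Filter.univ_mem (fun n _ => h n))
  rw [Ultrafilter.coe_map] at hr
  exact ⟨r, hr⟩

/-- Weak ultrafilter limit of a bounded sequence in a real Hilbert space. -/
lemma ultrafilter_weak_limit {H : Type*} [NormedAddCommGroup H] [InnerProductSpace ℝ H]
    [CompleteSpace H] (U : Ultrafilter ℕ) (ξ : ℕ → H) (C : ℝ) (hC : ∀ n, ‖ξ n‖ ≤ C) :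
    ∃ z : H, ∀ a : H, Tendsto (fun n => ⟪ξ n, a⟫) (U : Filter ℕ) (nhds ⟪z, a⟫) := by
  have hbd : ∀ (a : H) (n : ℕ), |⟪ξ n, a⟫| ≤ C * ‖a‖ := fun a n =>
    le_trans (abs_real_inner_le_norm _ _)
      (mul_le_mul_of_nonneg_right (hC n) (norm_nonneg a))
  have hex : ∀ a : H, ∃ r, Tendsto (fun n => ⟪ξ n, a⟫) (U : Filter ℕ) (nhds r) := fun a =>
    ultrafilter_real_limit U _ (-(C * ‖a‖)) (C * ‖a‖) (fun n => abs_le.mp (hbd a n))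
  choose r hr using hex
  have hadd : ∀ a b, r (a + b) = r a + r b := fun a b =>
    tendsto_nhds_unique (hr (a + b)) (by
      have := (hr a).add (hr b)
      simpa [inner_add_right] using this)
  have hsmul : ∀ (c : ℝ) (a : H), r (c • a) = c * r a := fun c a =>
    tendsto_nhds_unique (hr (c • a)) (by
      have := (hr a).const_mul c
      simpa [inner_smul_right] using this)
  have hbound : ∀ a, |r a| ≤ C * ‖a‖ := fun a =>
    le_of_tendsto ((hr a).abs) (Filter.Eventually.of_forall (hbd a))
  let φlin : H →ₗ[ℝ] ℝ :=
    { toFun := r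
      map_add' := hadd
      map_smul' := hsmul }
  let φ : H →L[ℝ] ℝ := φlin.mkContinuous C (fun a => by
    rw [Real.norm_eq_abs]; exact hbound a)
  refine ⟨(InnerProductSpace.toDual ℝ H).symm φ, fun a => ?_⟩
  have hz : ⟪(InnerProductSpace.toDual ℝ H).symm φ, a⟫ = φ a :=
    InnerProductSpace.toDual_symm_apply
  rw [hz]
  exact hr a

end L1StableAux

end L1StableAux

open L1StableAux

/-- Corollary 6.3 (Krivine–Maurey): `L₁` is stable: iterated ultrafilter
limits of `‖f_n - g_m‖₁` for bounded sequences commute. -/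
theorem L1_stable
    {Ω : Type*} [MeasurableSpace Ω] (μ : Measure Ω)
    (f g : ℕ → Lp ℝ 1 μ)
    (hbf : ∃ C : ℝ, ∀ n, ‖f n‖ ≤ C) (hbg : ∃ C : ℝ, ∀ m, ‖g m‖ ≤ C)
    (U V : Ultrafilter ℕ)
    (hU : (U : Filter ℕ) ≤ Filter.cofinite)
    (hV : (V : Filter ℕ) ≤ Filter.cofinite)
    (Sm Ln : ℕ → ℝ) (S L : ℝ)
    (hSm : ∀ m, Tendsto (fun n => ‖f n - g m‖) (U : Filter ℕ) (nhds (Sm m)))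
    (hS : Tendsto Sm (V : Filter ℕ) (nhds S))
    (hLn : ∀ n, Tendsto (fun m => ‖f n - g m‖) (V : Filter ℕ) (nhds (Ln n)))
    (hL : Tendsto Ln (U : Filter ℕ) (nhds L)) :
    S = L := by
  classical
  obtain ⟨Cf, hCf⟩ := hbf
  obtain ⟨Cg, hCg⟩ := hbg
  -- measurable representatives
  let v : ℕ → Ω → ℝ := fun n => (Lp.aestronglyMeasurable (f n)).mk _
  let w : ℕ → Ω → ℝ := fun m => (Lp.aestronglyMeasurable (g m)).mk _
  have hv_meas : ∀ n, Measurable (v n) := fun n =>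
    (Lp.aestronglyMeasurable (f n)).stronglyMeasurable_mk.measurable
  have hw_meas : ∀ m, Measurable (w m) := fun m =>
    (Lp.aestronglyMeasurable (g m)).stronglyMeasurable_mk.measurable
  have hv_ae : ∀ n, ⇑(f n) =ᵐ[μ] v n := fun n => (Lp.aestronglyMeasurable (f n)).ae_eq_mk
  have hw_ae : ∀ m, ⇑(g m) =ᵐ[μ] w m := fun m => (Lp.aestronglyMeasurable (g m)).ae_eq_mk
  have hv1 : ∀ n, eLpNorm (v n) 1 μ < ⊤ := fun n => by
    rw [← eLpNorm_congr_ae (hv_ae n)]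
    exact Lp.eLpNorm_lt_top (f n)
  have hw1 : ∀ m, eLpNorm (w m) 1 μ < ⊤ := fun m => by
    rw [← eLpNorm_congr_ae (hw_ae m)]
    exact Lp.eLpNorm_lt_top (g m)
  -- Hilbert space vectors
  let ξ : ℕ → Lp ℝ 2 (μ.prod (volume : Measure ℝ)) := fun n =>
    (memℒp_Phi (hv_meas n) (hv1 n)).toLp _
  let η : ℕ → Lp ℝ 2 (μ.prod (volume : Measure ℝ)) := fun m =>
    (memℒp_Phi (hw_meas m) (hw1 m)).toLp _
  -- key identity : ‖f n - g m‖ = ‖ξ n - η m‖²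
  have key : ∀ n m, ‖f n - g m‖ = ‖ξ n - η m‖ ^ 2 := by
    intro n m
    rw [norm_toLp_Phi_sub (hv_meas n) (hw_meas m)]
    rw [Lp.norm_def,
      eLpNorm_congr_ae (((Lp.coeFn_sub (f n) (g m)).trans ((hv_ae n).sub (hw_ae m))) :
        ⇑(f n - g m) =ᵐ[μ] fun ω => v n ω - w m ω),
      eLpNorm_one_eq_lintegral_nnnorm]
  -- norms of the vectors
  have normξ : ∀ n, ‖ξ n‖ ^ 2 = ‖f n‖ := by
    intro n
    have h0 : Measurable (fun _ : Ω => (0 : ℝ)) := measurable_const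
    have h00 : eLpNorm (fun _ : Ω => (0 : ℝ)) 1 μ < ⊤ := by
      simp [eLpNorm_zero]
    have h := norm_toLp_Phi_sub (μ := μ) (hv_meas n) h0
      (memℒp_Phi (hv_meas n) (hv1 n)) (memℒp_Phi h0 h00)
    have hz : (memℒp_Phi (μ := μ) h0 h00).toLp (Phi (fun _ : Ω => (0 : ℝ))) = 0 := by
      simp_rw [Phi_zero]
      exact MemLp.toLp_zero _
    rw [hz, sub_zero] at h
    have : ‖ξ n‖ ^ 2 = (∫⁻ ω, (‖v n ω - 0‖₊ : ℝ≥0∞) ∂μ).toReal := h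
    rw [this]
    simp only [sub_zero]
    rw [← eLpNorm_one_eq_lintegral_nnnorm, ← eLpNorm_congr_ae (hv_ae n), ← Lp.norm_def]
  have normη : ∀ m, ‖η m‖ ^ 2 = ‖g m‖ := by
    intro m
    have h0 : Measurable (fun _ : Ω => (0 : ℝ)) := measurable_const
    have h00 : eLpNorm (fun _ : Ω => (0 : ℝ)) 1 μ < ⊤ := by
      simp [eLpNorm_zero]
    have h := norm_toLp_Phi_sub (μ := μ) (hw_meas m) h0
      (memℒp_Phi (hw_meas m) (hw1 m)) (memℒp_Phi h0 h00)
    have hz : (memℒp_Phi (μ := μ) h0 h00).toLp (Phi (fun _ : Ω => (0 : ℝ))) = 0 := by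
      simp_rw [Phi_zero]
      exact MemLp.toLp_zero _
    rw [hz, sub_zero] at h
    have : ‖η m‖ ^ 2 = (∫⁻ ω, (‖w m ω - 0‖₊ : ℝ≥0∞) ∂μ).toReal := h
    rw [this]
    simp only [sub_zero]
    rw [← eLpNorm_one_eq_lintegral_nnnorm, ← eLpNorm_congr_ae (hw_ae m), ← Lp.norm_def]
  -- norm bounds
  have hξbd : ∀ n, ‖ξ n‖ ≤ Real.sqrt Cf := by
    intro n
    have h1 : ‖ξ n‖ ^ 2 ≤ Cf := by rw [normξ n]; exact hCf n
    have h2 := Real.sqrt_le_sqrt h1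
    rwa [Real.sqrt_sq (norm_nonneg _)] at h2
  have hηbd : ∀ m, ‖η m‖ ≤ Real.sqrt Cg := by
    intro m
    have h1 : ‖η m‖ ^ 2 ≤ Cg := by rw [normη m]; exact hCg m
    have h2 := Real.sqrt_le_sqrt h1
    rwa [Real.sqrt_sq (norm_nonneg _)] at h2
  -- scalar ultrafilter limits of the squared norms
  obtain ⟨α, hα⟩ := ultrafilter_real_limit U (fun n => ‖ξ n‖ ^ 2) 0 Cf
    (fun n => ⟨sq_nonneg _, by show ‖ξ n‖ ^ 2 ≤ Cf; rw [normξ n]; exact hCf n⟩)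
  obtain ⟨β, hβ⟩ := ultrafilter_real_limit V (fun m => ‖η m‖ ^ 2) 0 Cg
    (fun m => ⟨sq_nonneg _, by show ‖η m‖ ^ 2 ≤ Cg; rw [normη m]; exact hCg m⟩)
  -- weak ultrafilter limits
  obtain ⟨zξ, hzξ⟩ := ultrafilter_weak_limit U ξ (Real.sqrt Cf) hξbd
  obtain ⟨zη, hzη⟩ := ultrafilter_weak_limit V η (Real.sqrt Cg) hηbd
  -- compute S
  have hSm' : ∀ m, Sm m = α + ‖η m‖ ^ 2 - 2 * ⟪zξ, η m⟫ := by
    intro m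
    refine tendsto_nhds_unique (hSm m) ?_
    have heq : (fun n => ‖f n - g m‖)
        = fun n => ‖ξ n‖ ^ 2 + ‖η m‖ ^ 2 - 2 * ⟪ξ n, η m⟫ := by
      funext n
      rw [key n m, norm_sub_sq_real]
      ring
    rw [heq]
    exact (hα.add tendsto_const_nhds).sub ((hzξ (η m)).const_mul 2)
  have hS' : S = α + β - 2 * ⟪zη, zξ⟫ := by
    refine tendsto_nhds_unique hS ?_
    have heq : Sm = fun m => α + ‖η m‖ ^ 2 - 2 * ⟪η m, zξ⟫ := by
      funext m
      rw [hSm' m, real_inner_comm]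
    rw [heq]
    exact (tendsto_const_nhds.add hβ).sub ((hzη zξ).const_mul 2)
  -- compute L
  have hLn' : ∀ n, Ln n = ‖ξ n‖ ^ 2 + β - 2 * ⟪zη, ξ n⟫ := by
    intro n
    refine tendsto_nhds_unique (hLn n) ?_
    have heq : (fun m => ‖f n - g m‖)
        = fun m => ‖ξ n‖ ^ 2 + ‖η m‖ ^ 2 - 2 * ⟪η m, ξ n⟫ := by
      funext m
      rw [key n m, norm_sub_sq_real, real_inner_comm]
      ring
    rw [heq]
    have : Tendsto (fun m => ‖ξ n‖ ^ 2 + ‖η m‖ ^ 2) (V : Filter ℕ)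
        (nhds (‖ξ n‖ ^ 2 + β)) := tendsto_const_nhds.add hβ
    exact this.sub ((hzη (ξ n)).const_mul 2)
  have hL' : L = α + β - 2 * ⟪zξ, zη⟫ := by
    refine tendsto_nhds_unique hL ?_
    have heq : Ln = fun n => ‖ξ n‖ ^ 2 + β - 2 * ⟪ξ n, zη⟫ := by
      funext n
      rw [hLn' n, real_inner_comm]
    rw [heq]
    exact (hα.add tendsto_const_nhds).sub ((hzξ zη).const_mul 2)
  rw [hS', hL', real_inner_comm]
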